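/- arXiv:1612.07405 — 5 statements merged into one kernel-verified Lean document; each statement's English description precedes it below -/
import Mathlib

section
/- For all real numbers η > 0 and w > 0, the collision probability of the random-line LSH family evaluates in closed form: ∫₀^w (2/(√(2π)·η))·exp(−t²/(2η²))·(1 − t/w) dt = erf(w/(√2·η)) − √(2/π)·(η/w)·(1 − exp(−w²/(2η²))). -/
open Real

noncomputable def erf (x : ℝ) : ℝ :=
  (2 / Real.sqrt π) * ∫ t in (0:ℝ)..x, Real.exp (-t ^ 2)

lemma int_t_exp (b w : ℝ) (hb : 0 < b) :
    ∫ t in (0:ℝ)..w, t * Real.exp (-(b * t ^ 2))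
      = (1 - Real.exp (-(b * w ^ 2))) / (2 * b) := by
  have h : ∀ t ∈ Set.uIcc (0:ℝ) w,
      HasDerivAt (fun t => -Real.exp (-(b * t ^ 2)) / (2 * b))
        (t * Real.exp (-(b * t ^ 2))) t := by
    intro t _
    have h1 : HasDerivAt (fun t : ℝ => -(b * t ^ 2)) (-(b * (2 * t))) t := by
      have h0 := ((hasDerivAt_pow 2 t).const_mul b).neg
      simp at h0
      exact h0
    have h2 := (h1.exp).neg.div_const (2 * b)
    refine HasDerivAt.congr_deriv h2 ?_
    field_simp
  have hc : IntervalIntegrable (fun t => t * Real.exp (-(b * t ^ 2)))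
      MeasureTheory.volume 0 w := by
    apply Continuous.intervalIntegrable; continuity
  rw [intervalIntegral.integral_eq_sub_of_hasDerivAt h hc]
  simp
  ring

lemma int_gauss (c w : ℝ) (hc : c ≠ 0) :
    ∫ t in (0:ℝ)..w, Real.exp (-(t / c) ^ 2)
      = c * ∫ u in (0:ℝ)..(w / c), Real.exp (-u ^ 2) := by
  have := intervalIntegral.integral_comp_div (a := (0:ℝ)) (b := w)
    (fun u => Real.exp (-u ^ 2)) hc
  simpa [zero_div] using this

/-- Closed form for the collision probability of the random-line LSH family. -/
theorem collision_probability_closed_form (η w : ℝ) (hη : 0 < η) (hw : 0 < w) :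
    (∫ t in (0:ℝ)..w,
        (2 / (Real.sqrt (2 * π) * η)) * Real.exp (-t ^ 2 / (2 * η ^ 2)) * (1 - t / w))
      = erf (w / (Real.sqrt 2 * η))
        - Real.sqrt (2 / π) * (η / w) * (1 - Real.exp (-w ^ 2 / (2 * η ^ 2))) := by
  have h2 : (0:ℝ) < Real.sqrt 2 := by positivity
  have hπ : (0:ℝ) < Real.sqrt π := Real.sqrt_pos.2 Real.pi_pos
  set c := Real.sqrt 2 * η with hc
  have hcpos : 0 < c := by positivity
  have hcsq : c ^ 2 = 2 * η ^ 2 := by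
    rw [hc, mul_pow, Real.sq_sqrt (by norm_num : (2:ℝ) ≥ 0)]
  -- rewrite integrand
  have hint : ∀ t : ℝ,
      (2 / (Real.sqrt (2 * π) * η)) * Real.exp (-t ^ 2 / (2 * η ^ 2)) * (1 - t / w)
      = (2 / (Real.sqrt (2 * π) * η)) * Real.exp (-(t / c) ^ 2)
        - (2 / (Real.sqrt (2 * π) * η * w)) * (t * Real.exp (-((2 * η ^ 2)⁻¹ * t ^ 2))) := by
    intro t
    have : -(t / c) ^ 2 = -t ^ 2 / (2 * η ^ 2) := by
      rw [div_pow, hcsq]; ring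
    rw [this]
    have : -((2 * η ^ 2)⁻¹ * t ^ 2) = -t ^ 2 / (2 * η ^ 2) := by ring
    rw [this]
    ring
  have hI1 : IntervalIntegrable
      (fun t => (2 / (Real.sqrt (2 * π) * η)) * Real.exp (-(t / c) ^ 2))
      MeasureTheory.volume 0 w := by
    apply Continuous.intervalIntegrable; continuity
  have hI2 : IntervalIntegrable
      (fun t => (2 / (Real.sqrt (2 * π) * η * w)) * (t * Real.exp (-((2 * η ^ 2)⁻¹ * t ^ 2))))
      MeasureTheory.volume 0 w := by
    apply Continuous.intervalIntegrable; continuity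
  calc (∫ t in (0:ℝ)..w,
        (2 / (Real.sqrt (2 * π) * η)) * Real.exp (-t ^ 2 / (2 * η ^ 2)) * (1 - t / w))
      = ∫ t in (0:ℝ)..w,
          ((2 / (Real.sqrt (2 * π) * η)) * Real.exp (-(t / c) ^ 2)
            - (2 / (Real.sqrt (2 * π) * η * w)) * (t * Real.exp (-((2 * η ^ 2)⁻¹ * t ^ 2)))) := by
        exact intervalIntegral.integral_congr (fun t _ => hint t)
    _ = ((2 / (Real.sqrt (2 * π) * η)) * ∫ t in (0:ℝ)..w, Real.exp (-(t / c) ^ 2))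
        - (2 / (Real.sqrt (2 * π) * η * w)) *
            ∫ t in (0:ℝ)..w, t * Real.exp (-((2 * η ^ 2)⁻¹ * t ^ 2)) := by
        rw [intervalIntegral.integral_sub hI1 hI2,
          intervalIntegral.integral_const_mul, intervalIntegral.integral_const_mul]
    _ = erf (w / (Real.sqrt 2 * η))
        - Real.sqrt (2 / π) * (η / w) * (1 - Real.exp (-w ^ 2 / (2 * η ^ 2))) := by
        rw [int_gauss c w (ne_of_gt hcpos),
          int_t_exp ((2 * η ^ 2)⁻¹) w (by positivity)]
        have hE : -((2 * η ^ 2)⁻¹ * w ^ 2) = -w ^ 2 / (2 * η ^ 2) := by ring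
        rw [hE]
        rw [erf]
        have hs : Real.sqrt (2 * π) = Real.sqrt 2 * Real.sqrt π :=
          Real.sqrt_mul (by norm_num) _
        have hs2 : Real.sqrt (2 / π) = Real.sqrt 2 / Real.sqrt π :=
          Real.sqrt_div (by norm_num) π
        have h22 : Real.sqrt 2 * Real.sqrt 2 = 2 := Real.mul_self_sqrt (by norm_num)
        rw [hs, hs2, hc]
        set J := ∫ u in (0:ℝ)..(w / (Real.sqrt 2 * η)), Real.exp (-u ^ 2) with hJ
        set E := Real.exp (-w ^ 2 / (2 * η ^ 2)) with hEdef
        field_simp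
        have h2sq : Real.sqrt 2 ^ 2 = 2 := Real.sq_sqrt (by norm_num)
        have h2cube : Real.sqrt 2 ^ 3 = 2 * Real.sqrt 2 := by
          rw [pow_succ, h2sq]
        ring_nf
        rw [h2sq]
        ring
end

section
/- The function c ↦ erf(c/√2) − √(2/π)·(1/c)·(1 − exp(−c²/2)) is concave on the interval [1, 2]. -/
open Real

lemma hasDerivAt_erf (x : ℝ) :
    HasDerivAt erf ((2 / Real.sqrt π) * Real.exp (-x ^ 2)) x := by
  have hc : Continuous fun t : ℝ => Real.exp (-t ^ 2) := by continuity
  have h := intervalIntegral.integral_hasDerivAt_right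
    (hc.intervalIntegrable 0 x) (hc.stronglyMeasurableAtFilter _ _) hc.continuousAt
  exact h.const_mul _

lemma hasDerivAt_f (c : ℝ) (hc : c ≠ 0) :
    HasDerivAt (fun c => erf (c / Real.sqrt 2)
        - Real.sqrt (2 / π) * (1 / c) * (1 - Real.exp (-c ^ 2 / 2)))
      (Real.sqrt (2 / π) * (1 - Real.exp (-c ^ 2 / 2)) / c ^ 2) c := by
  have h2 : Real.sqrt 2 * Real.sqrt 2 = 2 := Real.mul_self_sqrt (by norm_num)
  have h2pos : (0:ℝ) < Real.sqrt 2 := Real.sqrt_pos.2 (by norm_num)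
  have hπ : (0:ℝ) < Real.sqrt π := Real.sqrt_pos.2 Real.pi_pos
  have hK : Real.sqrt (2 / π) = Real.sqrt 2 / Real.sqrt π := Real.sqrt_div (by norm_num) π
  have hinner : HasDerivAt (fun c : ℝ => c / Real.sqrt 2) (Real.sqrt 2)⁻¹ c := by
    simpa using (hasDerivAt_id c).div_const (Real.sqrt 2)
  have h1 : HasDerivAt (fun c : ℝ => erf (c / Real.sqrt 2))
      ((2 / Real.sqrt π) * Real.exp (-(c / Real.sqrt 2) ^ 2) * (Real.sqrt 2)⁻¹) c :=
    by have := (hasDerivAt_erf (c / Real.sqrt 2)).comp c hinner; exact this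
  have hsq : (c / Real.sqrt 2) ^ 2 = c ^ 2 / 2 := by
    rw [div_pow, Real.sq_sqrt (by norm_num : (0:ℝ) ≤ 2)]
  rw [hsq] at h1
  have hinv : HasDerivAt (fun x : ℝ => 1 / x) (-(c ^ 2)⁻¹) c := by
    simpa [one_div] using hasDerivAt_inv hc
  have hp : HasDerivAt (fun x : ℝ => -x ^ 2 / 2) (-((2:ℕ) * c ^ 1) / 2) c :=
    ((hasDerivAt_pow 2 c).neg).div_const 2
  have he := (hasDerivAt_const c 1).sub hp.exp
  have h3 := ((hinv.const_mul (Real.sqrt (2 / π))).mul he)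
  have h4 := h1.sub h3
  refine h4.congr_deriv ?_
  simp only [Pi.sub_apply]
  have hE : -(c ^ 2 / 2) = -c ^ 2 / 2 := by ring
  rw [hE, hK]
  field_simp
  ring_nf
  rw [Real.sq_sqrt (by norm_num : (0:ℝ) ≤ 2)]
  ring

/-- derivative of g(c) = K(1-exp(-c²/2))/c² -/
lemma hasDerivAt_g (c : ℝ) (hc : c ≠ 0) :
    HasDerivAt (fun c : ℝ => Real.sqrt (2 / π) * (1 - Real.exp (-c ^ 2 / 2)) / c ^ 2)
      ((Real.sqrt (2 / π) * (Real.exp (-c ^ 2 / 2) * c) * c ^ 2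
        - Real.sqrt (2 / π) * (1 - Real.exp (-c ^ 2 / 2)) * ((2:ℕ) * c ^ 1)) / (c ^ 2) ^ 2) c := by
  have hp : HasDerivAt (fun x : ℝ => -x ^ 2 / 2) (-((2:ℕ) * c ^ 1) / 2) c :=
    ((hasDerivAt_pow 2 c).neg).div_const 2
  have he := ((hasDerivAt_const c 1).sub hp.exp).const_mul (Real.sqrt (2 / π))
  have hd := he.div (hasDerivAt_pow 2 c) (pow_ne_zero 2 hc)
  refine hd.congr_deriv ?_
  simp only [Pi.sub_apply]
  push_cast
  ring

lemma g_deriv_nonpos (c : ℝ) (hc : 1 ≤ c) :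
    (Real.sqrt (2 / π) * (Real.exp (-c ^ 2 / 2) * c) * c ^ 2
        - Real.sqrt (2 / π) * (1 - Real.exp (-c ^ 2 / 2)) * ((2:ℕ) * c ^ 1)) / (c ^ 2) ^ 2 ≤ 0 := by
  have hc0 : (0:ℝ) < c := by linarith
  have hK : (0:ℝ) ≤ Real.sqrt (2 / π) := Real.sqrt_nonneg _
  have hexp : c ^ 2 / 2 + 1 ≤ Real.exp (c ^ 2 / 2) := Real.add_one_le_exp _
  have hE : Real.exp (-c ^ 2 / 2) * Real.exp (c ^ 2 / 2) = 1 := by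
    rw [← Real.exp_add]; ring_nf; exact Real.exp_zero
  have hEpos := Real.exp_pos (-c ^ 2 / 2)
  have hEpos' := Real.exp_pos (c ^ 2 / 2)
  apply div_nonpos_of_nonpos_of_nonneg _ (by positivity)
  push_cast
  have key : Real.exp (-c ^ 2 / 2) * (c ^ 2 + 2) ≤ 2 := by
    have h1 : c ^ 2 + 2 ≤ 2 * Real.exp (c ^ 2 / 2) := by nlinarith
    calc Real.exp (-c ^ 2 / 2) * (c ^ 2 + 2)
        ≤ Real.exp (-c ^ 2 / 2) * (2 * Real.exp (c ^ 2 / 2)) := by nlinarith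
      _ = 2 := by rw [mul_comm 2, ← mul_assoc, hE]; ring
  nlinarith [mul_nonneg hK hc0.le]

/-- The collision probability `p₁(c)` of the random-line LSH family with window width
`w = c` for points at distance 1 is concave on `[1, 2]`. -/
theorem p1_concaveOn :
    ConcaveOn ℝ (Set.Icc (1:ℝ) 2)
      (fun c => erf (c / Real.sqrt 2)
        - Real.sqrt (2 / π) * (1 / c) * (1 - Real.exp (-c ^ 2 / 2))) := by
  set g : ℝ → ℝ := fun c => Real.sqrt (2 / π) * (1 - Real.exp (-c ^ 2 / 2)) / c ^ 2 with hg
  have hint : interior (Set.Icc (1:ℝ) 2) = Set.Ioo 1 2 := interior_Icc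
  have hne : ∀ x ∈ Set.Icc (1:ℝ) 2, x ≠ 0 := fun x hx => by
    have := hx.1; intro h; rw [h] at this; linarith
  -- g antitone on Icc 1 2
  have hganti : AntitoneOn g (Set.Icc (1:ℝ) 2) := by
    apply antitoneOn_of_deriv_nonpos (convex_Icc 1 2)
    · exact fun x hx => (hasDerivAt_g x (hne x hx)).continuousAt.continuousWithinAt
    · rw [hint]
      exact fun x hx => ((hasDerivAt_g x (by intro h; rw [h] at hx; exact absurd hx.1 (by norm_num))).differentiableAt).differentiableWithinAt
    · rw [hint]
      intro x hx
      rw [(hasDerivAt_g x (by intro h; rw [h] at hx; exact absurd hx.1 (by norm_num))).deriv]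
      exact g_deriv_nonpos x hx.1.le
  apply AntitoneOn.concaveOn_of_deriv (convex_Icc 1 2)
  · exact fun x hx => (hasDerivAt_f x (hne x hx)).continuousAt.continuousWithinAt
  · rw [hint]
    exact fun x hx => ((hasDerivAt_f x (hne x (Set.Ioo_subset_Icc_self hx))).differentiableAt).differentiableWithinAt
  · rw [hint]
    intro a ha b hb hab
    rw [(hasDerivAt_f a (hne a (Set.Ioo_subset_Icc_self ha))).deriv,
        (hasDerivAt_f b (hne b (Set.Ioo_subset_Icc_self hb))).deriv]
    exact hganti (Set.Ioo_subset_Icc_self ha) (Set.Ioo_subset_Icc_self hb) hab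
end

section
/- For every c ∈ (1, 2], it holds that H((1 − p₁(c))/2) < 0.9, where p₁(c) = erf(c/√2) − √(2/π)·(1/c)·(1 − exp(−c²/2)). -/
open Real

/-- The binary entropy function (base-2 logarithm), with `H(0) = H(1) = 0`
by the convention `logb 2 0 = 0`. -/
noncomputable def binH (x : ℝ) : ℝ :=
  -x * Real.logb 2 x - (1 - x) * Real.logb 2 (1 - x)

/-! ### Auxiliary definitions and lemmas -/

/-- The collision probability function. -/
noncomputable def p1 (c : ℝ) : ℝ :=
  erf (c / Real.sqrt 2) - Real.sqrt (2 / π) * (1 / c) * (1 - Real.exp (-c ^ 2 / 2))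

lemma erf_hasDerivAt (x : ℝ) :
    HasDerivAt erf (2 / Real.sqrt π * Real.exp (-x ^ 2)) x := by
  have hc : Continuous fun t : ℝ => Real.exp (-t ^ 2) := by continuity
  have h1 : HasDerivAt (fun u : ℝ => ∫ t in (0:ℝ)..u, Real.exp (-t ^ 2))
      (Real.exp (-x ^ 2)) x :=
    intervalIntegral.integral_hasDerivAt_right (hc.intervalIntegrable _ _)
      hc.aestronglyMeasurable.stronglyMeasurableAtFilter hc.continuousAt
  exact h1.const_mul _

lemma sqrt_two_pi_eq : 2 / Real.sqrt π * (1 / Real.sqrt 2) = Real.sqrt (2 / π) := by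
  have h2 : Real.sqrt 2 * Real.sqrt 2 = 2 := Real.mul_self_sqrt (by norm_num)
  have hπ : Real.sqrt π ≠ 0 := ne_of_gt (Real.sqrt_pos.2 pi_pos)
  have h2' : Real.sqrt 2 ≠ 0 := by positivity
  rw [Real.sqrt_div (by norm_num : (0:ℝ) ≤ 2)]
  field_simp
  nlinarith [h2, Real.sqrt_nonneg π]

lemma p1_hasDerivAt {c : ℝ} (hc : c ≠ 0) :
    HasDerivAt p1 (Real.sqrt (2 / π) * ((1 - Real.exp (-c ^ 2 / 2)) / c ^ 2)) c := by
  have hinner : HasDerivAt (fun c : ℝ => c / Real.sqrt 2) (1 / Real.sqrt 2) c := by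
    simpa using (hasDerivAt_id c).div_const (Real.sqrt 2)
  have h1 : HasDerivAt (fun c : ℝ => erf (c / Real.sqrt 2))
      (2 / Real.sqrt π * Real.exp (-(c / Real.sqrt 2) ^ 2) * (1 / Real.sqrt 2)) c :=
    (erf_hasDerivAt _).comp c hinner
  have hsq : (c / Real.sqrt 2) ^ 2 = c ^ 2 / 2 := by
    rw [div_pow, Real.sq_sqrt (by norm_num : (0:ℝ) ≤ 2)]
  have h2 : HasDerivAt (fun c : ℝ => (1 : ℝ) / c) (-(1 / c ^ 2)) c := by
    simpa [one_div] using (hasDerivAt_inv hc)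
  have hexp : HasDerivAt (fun c : ℝ => Real.exp (-c ^ 2 / 2))
      (Real.exp (-c ^ 2 / 2) * (-c)) c := by
    have hin : HasDerivAt (fun c : ℝ => -c ^ 2 / 2) (-c) c := by
      have := ((hasDerivAt_pow 2 c).neg).div_const 2
      exact this.congr_deriv (by push_cast; ring)
    exact (Real.hasDerivAt_exp _).comp c hin
  have h3 : HasDerivAt (fun c : ℝ => 1 - Real.exp (-c ^ 2 / 2))
      (c * Real.exp (-c ^ 2 / 2)) c := by
    have := (hexp).const_sub 1
    exact this.congr_deriv (by ring)
  have h4 : HasDerivAt (fun c : ℝ => Real.sqrt (2 / π) * (1 / c) * (1 - Real.exp (-c ^ 2 / 2)))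
      ((Real.sqrt (2 / π) * (-(1 / c ^ 2))) * (1 - Real.exp (-c ^ 2 / 2))
        + (Real.sqrt (2 / π) * (1 / c)) * (c * Real.exp (-c ^ 2 / 2))) c :=
    (h2.const_mul (Real.sqrt (2 / π))).mul h3
  have h5 := h1.sub h4
  refine h5.congr_deriv ?_
  rw [hsq, ← sqrt_two_pi_eq]
  field_simp
  ring

lemma p1_strictMono : StrictMonoOn p1 (Set.Icc (1:ℝ) 2) := by
  apply strictMonoOn_of_deriv_pos (convex_Icc 1 2)
  · intro x hx
    have hx0 : x ≠ 0 := by rintro rfl; exact absurd hx.1 (by norm_num)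
    exact (p1_hasDerivAt hx0).continuousAt.continuousWithinAt
  · intro x hx
    rw [interior_Icc] at hx
    have hx0 : (0:ℝ) < x := lt_trans one_pos hx.1
    rw [(p1_hasDerivAt hx0.ne').deriv]
    have he : Real.exp (-x ^ 2 / 2) < 1 := by
      rw [← Real.exp_zero]
      apply Real.exp_lt_exp.2
      nlinarith
    have h1 : (0:ℝ) < Real.sqrt (2 / π) := Real.sqrt_pos.2 (by positivity)
    have h2 : (0:ℝ) < 1 - Real.exp (-x ^ 2 / 2) := by linarith
    positivity

lemma exp_sq_lower {t : ℝ} (ht : t ^ 2 ≤ 1) :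
    1 - t ^ 2 + t ^ 4 / 2 - t ^ 6 / 6 + t ^ 8 / 24 - t ^ 10 / 120 - 7 * t ^ 12 / 4320
      ≤ Real.exp (-t ^ 2) := by
  have habs : |(-t ^ 2 : ℝ)| ≤ 1 := by
    rw [abs_neg, abs_of_nonneg (by positivity)]; exact ht
  have h := Real.exp_bound habs (by norm_num : 0 < 6)
  rw [abs_le] at h
  have h1 := h.1
  simp only [Finset.sum_range_succ, Finset.sum_range_zero] at h1
  have habs2 : |(-t ^ 2 : ℝ)| = t ^ 2 := by
    rw [abs_neg, abs_of_nonneg (by positivity)]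
  rw [habs2] at h1
  norm_num [Nat.factorial] at h1 ⊢
  nlinarith [h1]

lemma exp_half_lower : (0.6065303 : ℝ) ≤ Real.exp (-(1/2)) := by
  have habs : |(-(1/2) : ℝ)| ≤ 1 := by rw [abs_neg]; rw [abs_of_nonneg] <;> norm_num
  have h := Real.exp_bound habs (by norm_num : 0 < 7)
  rw [abs_le] at h
  have h1 := h.1
  simp only [Finset.sum_range_succ, Finset.sum_range_zero] at h1
  have habs2 : |(-(1/2) : ℝ)| = 1/2 := by rw [abs_neg]; rw [abs_of_nonneg] <;> norm_num
  rw [habs2] at h1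
  norm_num [Nat.factorial] at h1 ⊢
  nlinarith [h1]

lemma sqrt_two_div_pi_lower : (0.797884 : ℝ) ≤ Real.sqrt (2 / π) := by
  rw [show (0.797884:ℝ) = Real.sqrt (0.797884 ^ 2) by
    rw [Real.sqrt_sq (by norm_num)]]
  apply Real.sqrt_le_sqrt
  rw [le_div_iff₀ Real.pi_pos]
  nlinarith [Real.pi_lt_d6]

/-- Antiderivative of the lower Taylor bound for `exp (-t^2)`. -/
noncomputable def Qpoly (t : ℝ) : ℝ :=
  t - t ^ 3 / 3 + t ^ 5 / 10 - t ^ 7 / 42 + t ^ 9 / 216 - t ^ 11 / 1320 - 7 * t ^ 13 / 56160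

lemma Qpoly_hasDerivAt (t : ℝ) :
    HasDerivAt Qpoly
      (1 - t ^ 2 + t ^ 4 / 2 - t ^ 6 / 6 + t ^ 8 / 24 - t ^ 10 / 120 - 7 * t ^ 12 / 4320) t := by
  have h := ((((((hasDerivAt_id t).sub ((hasDerivAt_pow 3 t).div_const 3)).add
      ((hasDerivAt_pow 5 t).div_const 10)).sub ((hasDerivAt_pow 7 t).div_const 42)).add
      ((hasDerivAt_pow 9 t).div_const 216)).sub ((hasDerivAt_pow 11 t).div_const 1320)).sub
      (((hasDerivAt_pow 13 t).const_mul (7/56160)))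
  have heq : HasDerivAt Qpoly (1 - (3:ℕ) * t ^ 2 / 3 + (5:ℕ) * t ^ 4 / 10 - (7:ℕ) * t ^ 6 / 42
      + (9:ℕ) * t ^ 8 / 216 - (11:ℕ) * t ^ 10 / 1320 - 7/56160 * ((13:ℕ) * t ^ 12)) t := by
    refine (h.congr_of_eventuallyEq (Filter.Eventually.of_forall fun x => ?_)).congr_deriv ?_
    · unfold Qpoly
      simp only [Pi.sub_apply, Pi.add_apply, id_eq]
      ring
    · push_cast
      ring
  convert heq using 1
  push_cast
  ring

lemma integral_lower :
    (236798621/276756480 : ℝ) * (1 / Real.sqrt 2)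
      ≤ ∫ t in (0:ℝ)..(1 / Real.sqrt 2), Real.exp (-t ^ 2) := by
  set a : ℝ := 1 / Real.sqrt 2 with ha
  have ha0 : 0 ≤ a := by positivity
  have ha2 : a ^ 2 = 1 / 2 := by
    rw [ha, div_pow, one_pow, Real.sq_sqrt (by norm_num : (0:ℝ) ≤ 2)]
  have hcP : Continuous fun t : ℝ =>
      1 - t ^ 2 + t ^ 4 / 2 - t ^ 6 / 6 + t ^ 8 / 24 - t ^ 10 / 120 - 7 * t ^ 12 / 4320 := by
    continuity
  have hcE : Continuous fun t : ℝ => Real.exp (-t ^ 2) := by continuity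
  have hmono : (∫ t in (0:ℝ)..a,
        (1 - t ^ 2 + t ^ 4 / 2 - t ^ 6 / 6 + t ^ 8 / 24 - t ^ 10 / 120 - 7 * t ^ 12 / 4320))
      ≤ ∫ t in (0:ℝ)..a, Real.exp (-t ^ 2) := by
    apply intervalIntegral.integral_mono_on ha0
      (hcP.intervalIntegrable _ _) (hcE.intervalIntegrable _ _)
    intro t ht
    apply exp_sq_lower
    have h1 : t ^ 2 ≤ a ^ 2 := by nlinarith [ht.1, ht.2]
    rw [ha2] at h1; linarith
  have hval : (∫ t in (0:ℝ)..a,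
        (1 - t ^ 2 + t ^ 4 / 2 - t ^ 6 / 6 + t ^ 8 / 24 - t ^ 10 / 120 - 7 * t ^ 12 / 4320))
      = Qpoly a - Qpoly 0 := by
    apply intervalIntegral.integral_eq_sub_of_hasDerivAt
    · intro t _; exact Qpoly_hasDerivAt t
    · exact hcP.intervalIntegrable _ _
  have hQ0 : Qpoly 0 = 0 := by unfold Qpoly; norm_num
  have hQa : Qpoly a = (236798621/276756480 : ℝ) * a := by
    unfold Qpoly
    have h3 : a ^ 3 = (1/2) * a := by
      rw [pow_succ, ha2]
    have h5 : a ^ 5 = (1/4) * a := by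
      rw [show (5:ℕ) = 2*2+1 from rfl, pow_succ, pow_mul, ha2]; norm_num
    have h7 : a ^ 7 = (1/8) * a := by
      rw [show a ^ 7 = (a ^ 2) ^ 3 * a by ring, ha2]; norm_num
    have h9 : a ^ 9 = (1/16) * a := by
      rw [show a ^ 9 = (a ^ 2) ^ 4 * a by ring, ha2]; norm_num
    have h11 : a ^ 11 = (1/32) * a := by
      rw [show a ^ 11 = (a ^ 2) ^ 5 * a by ring, ha2]; norm_num
    have h13 : a ^ 13 = (1/64) * a := by
      rw [show a ^ 13 = (a ^ 2) ^ 6 * a by ring, ha2]; norm_num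
    rw [h3, h5, h7, h9, h11, h13]
    ring
  rw [hval, hQ0, hQa] at hmono
  linarith

lemma p1_one_lower : (0.36874 : ℝ) < p1 1 := by
  have hs : (0:ℝ) ≤ Real.sqrt (2 / π) := Real.sqrt_nonneg _
  have h1 : Real.sqrt (2 / π) * (236798621/276756480 : ℝ) ≤ erf (1 / Real.sqrt 2) := by
    unfold erf
    have h := integral_lower
    have hpos : (0:ℝ) ≤ 2 / Real.sqrt π := by positivity
    calc Real.sqrt (2 / π) * (236798621/276756480 : ℝ)
        = 2 / Real.sqrt π * ((236798621/276756480 : ℝ) * (1 / Real.sqrt 2)) := by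
          rw [← sqrt_two_pi_eq]; ring
      _ ≤ 2 / Real.sqrt π * ∫ t in (0:ℝ)..(1 / Real.sqrt 2), Real.exp (-t ^ 2) :=
          mul_le_mul_of_nonneg_left h hpos
  have hE : (0.6065303 : ℝ) ≤ Real.exp (-(1:ℝ) ^ 2 / 2) := by
    rw [show (-(1:ℝ) ^ 2 / 2) = -(1/2) by norm_num]
    exact exp_half_lower
  have h2 : Real.sqrt (2 / π) * (1 / 1) * (1 - Real.exp (-(1:ℝ) ^ 2 / 2))
      ≤ Real.sqrt (2 / π) * (1 - 0.6065303) := by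
    rw [div_one, mul_one]
    apply mul_le_mul_of_nonneg_left _ hs
    linarith
  have h3 : p1 1 ≥ Real.sqrt (2 / π) * ((236798621/276756480 : ℝ) - (1 - 0.6065303)) := by
    unfold p1
    have heq : Real.sqrt (2 / π) * ((236798621/276756480 : ℝ) - (1 - 0.6065303))
        = Real.sqrt (2 / π) * (236798621/276756480 : ℝ)
          - Real.sqrt (2 / π) * (1 - 0.6065303) := by ring
    rw [heq]
    have := h1
    gcongr
  have h4 : (0.797884 : ℝ) * ((236798621/276756480 : ℝ) - (1 - 0.6065303))
      ≤ Real.sqrt (2 / π) * ((236798621/276756480 : ℝ) - (1 - 0.6065303)) :=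
    mul_le_mul_of_nonneg_right sqrt_two_div_pi_lower (by norm_num)
  have h5 : (0.36874 : ℝ) < (0.797884 : ℝ) * ((236798621/276756480 : ℝ) - (1 - 0.6065303)) := by
    norm_num
  linarith

lemma log_series_lower {u : ℝ} (hu0 : 0 < u) (hu1 : u < 1) :
    (∑ i ∈ Finset.range 9, u ^ (i + 1) / (i + 1)) - u ^ 10 / (1 - u) ≤ -Real.log (1 - u) := by
  have habs : |u| < 1 := by rw [abs_of_nonneg hu0.le]; exact hu1
  have h := Real.abs_log_sub_add_sum_range_le habs 9
  rw [abs_of_nonneg hu0.le] at h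
  rw [abs_le] at h
  linarith [h.2]

lemma A_lower : (0.23310 : ℝ) ≤ -Real.log (1 - (6563/31563 : ℝ)) := by
  have h := log_series_lower (u := (6563/31563 : ℝ)) (by norm_num) (by norm_num)
  refine le_trans ?_ h
  simp only [Finset.sum_range_succ, Finset.sum_range_zero]
  norm_num

lemma B_lower : (0.31388 : ℝ) ≤ -Real.log (1 - (18437/68437 : ℝ)) := by
  have h := log_series_lower (u := (18437/68437 : ℝ)) (by norm_num) (by norm_num)
  refine le_trans ?_ h
  simp only [Finset.sum_range_succ, Finset.sum_range_zero]
  norm_num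

lemma binEntropy_x1 : Real.binEntropy 0.31563 < 0.9 * Real.log 2 := by
  have hA := A_lower
  have hB := B_lower
  have h1 : Real.log (0.31563:ℝ) = -Real.log (1 - (6563/31563:ℝ)) - 2 * Real.log 2 := by
    rw [show (0.31563:ℝ) = (1 - (6563/31563:ℝ))⁻¹ / 4 by norm_num]
    rw [Real.log_div (by norm_num) (by norm_num), Real.log_inv,
        show (4:ℝ) = 2^2 by norm_num, Real.log_pow]
    push_cast; ring
  have h2 : Real.log (1 - (0.31563:ℝ)) = -Real.log (1 - (18437/68437:ℝ)) - Real.log 2 := by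
    rw [show (1 - (0.31563:ℝ)) = (1 - (18437/68437:ℝ))⁻¹ / 2 by norm_num]
    rw [Real.log_div (by norm_num) (by norm_num), Real.log_inv]
  unfold Real.binEntropy
  rw [Real.log_inv, Real.log_inv, h1, h2]
  have hL := Real.log_two_lt_d9
  have hL2 := Real.log_two_gt_d9
  linarith [hA, hB]

lemma binH_eq (y : ℝ) : binH y = Real.binEntropy y / Real.log 2 := by
  unfold binH Real.binEntropy Real.logb
  rw [Real.log_inv, Real.log_inv]
  ring

/-- For every `c ∈ (1,2]`, `H((1 − p₁(c))/2) < 0.9`. -/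
theorem entropy_lt (c : ℝ) (hc : c ∈ Set.Ioc (1:ℝ) 2) :
    binH ((1 - (erf (c / Real.sqrt 2)
      - Real.sqrt (2 / π) * (1 / c) * (1 - Real.exp (-c ^ 2 / 2)))) / 2) < 0.9 := by
  obtain ⟨hc1, hc2⟩ := hc
  have hmono : p1 1 < p1 c :=
    p1_strictMono (Set.mem_Icc.2 ⟨le_refl 1, by norm_num⟩)
      (Set.mem_Icc.2 ⟨hc1.le, hc2⟩) hc1
  have hp : (0.36874:ℝ) < p1 c := lt_trans p1_one_lower hmono
  show binH ((1 - p1 c) / 2) < 0.9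
  set x := (1 - p1 c) / 2 with hx
  rw [binH_eq, div_lt_iff₀ (Real.log_pos one_lt_two)]
  have hxlt : x < 0.31563 := by rw [hx]; norm_num; linarith
  rcases lt_or_ge x 0 with h | h
  · have hneg := Real.binEntropy_neg_of_neg h
    have hpos : (0:ℝ) < 0.9 * Real.log 2 := by
      have := Real.log_pos (by norm_num : (1:ℝ) < 2)
      linarith
    linarith
  · have hlt : Real.binEntropy x < Real.binEntropy 0.31563 :=
      Real.binEntropy_strictMonoOn
        ⟨h, le_of_lt (lt_of_lt_of_le hxlt (by norm_num))⟩
        ⟨by norm_num, by norm_num⟩ hxlt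
    linarith [binEntropy_x1]
end

section
/- For every c ∈ (1, 2], it holds that ((p₁(c) − p₂)² / (1 − p₂)) · (log₂ e)/4 ≥ 0.03·(c−1)², where p₁(c) = erf(c/√2) − √(2/π)·(1/c)·(1 − exp(−c²/2)) and p₂ = erf(1/√2) − √(2/π)·(1 − exp(−1/2)). -/
open Real

set_option maxHeartbeats 1000000

private lemma nonneg_of_deriv (F F' : ℝ → ℝ) (hd : ∀ x, HasDerivAt F (F' x) x)
    (h0 : F 0 = 0) (hF' : ∀ x, 0 ≤ x → 0 ≤ F' x) : ∀ x, 0 ≤ x → 0 ≤ F x := by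
  intro x hx
  rcases eq_or_lt_of_le hx with h | h
  · exact le_of_eq (h ▸ h0.symm)
  · obtain ⟨t, ht, hts⟩ := exists_hasDerivAt_eq_slope F F' h
      (fun y _ => (hd y).continuousAt.continuousWithinAt)
      (fun y _ => hd y)
    have h1 : 0 ≤ F' t := hF' t ht.1.le
    rw [hts, h0, sub_zero, sub_zero, le_div_iff₀ h] at h1
    linarith

private lemma hasDerivAt_expNeg (y : ℝ) :
    HasDerivAt (fun z : ℝ => Real.exp (-z)) (-Real.exp (-y)) y := by
  simpa [Function.comp_def] using (Real.hasDerivAt_exp (-y)).comp y (hasDerivAt_id' (x := y)).neg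


private lemma step1 : ∀ x : ℝ, 0 ≤ x → 1 - x ≤ Real.exp (-x) := by
  intro x _
  have h := Real.add_one_le_exp (-x)
  linarith


private lemma step2 : ∀ x : ℝ, 0 ≤ x → Real.exp (-x) ≤ 1 - x + x^2/2 := by
  have hF : ∀ y : ℝ, HasDerivAt (fun z : ℝ => 1 - z + z^2/2 - Real.exp (-z)) (-(1 - y) + Real.exp (-y)) y := by
    intro y
    have hpoly := (((hasDerivAt_const y (1:ℝ)).sub (hasDerivAt_id' (x := y))).add ((hasDerivAt_pow 2 y).div_const 2))
    have h := (hpoly.sub (hasDerivAt_expNeg y))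
    refine h.congr_deriv ?_
    push_cast
    ring
  have key := nonneg_of_deriv _ _ hF (by norm_num) (fun y hy => by
    have h := step1 y hy
    linarith)
  intro x hx
  linarith [key x hx]


private lemma step3 : ∀ x : ℝ, 0 ≤ x → 1 - x + x^2/2 - x^3/6 ≤ Real.exp (-x) := by
  have hF : ∀ y : ℝ, HasDerivAt (fun z : ℝ => Real.exp (-z) - (1 - z + z^2/2 - z^3/6)) (-Real.exp (-y) + (1 - y + y^2/2)) y := by
    intro y
    have hpoly := ((((hasDerivAt_const y (1:ℝ)).sub (hasDerivAt_id' (x := y))).add ((hasDerivAt_pow 2 y).div_const 2)).sub ((hasDerivAt_pow 3 y).div_const 6))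
    have h := ((hasDerivAt_expNeg y).sub hpoly)
    refine h.congr_deriv ?_
    push_cast
    ring
  have key := nonneg_of_deriv _ _ hF (by norm_num) (fun y hy => by
    have h := step2 y hy
    linarith)
  intro x hx
  linarith [key x hx]


private lemma step4 : ∀ x : ℝ, 0 ≤ x → Real.exp (-x) ≤ 1 - x + x^2/2 - x^3/6 + x^4/24 := by
  have hF : ∀ y : ℝ, HasDerivAt (fun z : ℝ => 1 - z + z^2/2 - z^3/6 + z^4/24 - Real.exp (-z)) (-(1 - y + y^2/2 - y^3/6) + Real.exp (-y)) y := by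
    intro y
    have hpoly := (((((hasDerivAt_const y (1:ℝ)).sub (hasDerivAt_id' (x := y))).add ((hasDerivAt_pow 2 y).div_const 2)).sub ((hasDerivAt_pow 3 y).div_const 6)).add ((hasDerivAt_pow 4 y).div_const 24))
    have h := (hpoly.sub (hasDerivAt_expNeg y))
    refine h.congr_deriv ?_
    push_cast
    ring
  have key := nonneg_of_deriv _ _ hF (by norm_num) (fun y hy => by
    have h := step3 y hy
    linarith)
  intro x hx
  linarith [key x hx]


private lemma step5 : ∀ x : ℝ, 0 ≤ x → 1 - x + x^2/2 - x^3/6 + x^4/24 - x^5/120 ≤ Real.exp (-x) := by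
  have hF : ∀ y : ℝ, HasDerivAt (fun z : ℝ => Real.exp (-z) - (1 - z + z^2/2 - z^3/6 + z^4/24 - z^5/120)) (-Real.exp (-y) + (1 - y + y^2/2 - y^3/6 + y^4/24)) y := by
    intro y
    have hpoly := ((((((hasDerivAt_const y (1:ℝ)).sub (hasDerivAt_id' (x := y))).add ((hasDerivAt_pow 2 y).div_const 2)).sub ((hasDerivAt_pow 3 y).div_const 6)).add ((hasDerivAt_pow 4 y).div_const 24)).sub ((hasDerivAt_pow 5 y).div_const 120))
    have h := ((hasDerivAt_expNeg y).sub hpoly)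
    refine h.congr_deriv ?_
    push_cast
    ring
  have key := nonneg_of_deriv _ _ hF (by norm_num) (fun y hy => by
    have h := step4 y hy
    linarith)
  intro x hx
  linarith [key x hx]


private lemma step6 : ∀ x : ℝ, 0 ≤ x → Real.exp (-x) ≤ 1 - x + x^2/2 - x^3/6 + x^4/24 - x^5/120 + x^6/720 := by
  have hF : ∀ y : ℝ, HasDerivAt (fun z : ℝ => 1 - z + z^2/2 - z^3/6 + z^4/24 - z^5/120 + z^6/720 - Real.exp (-z)) (-(1 - y + y^2/2 - y^3/6 + y^4/24 - y^5/120) + Real.exp (-y)) y := by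
    intro y
    have hpoly := (((((((hasDerivAt_const y (1:ℝ)).sub (hasDerivAt_id' (x := y))).add ((hasDerivAt_pow 2 y).div_const 2)).sub ((hasDerivAt_pow 3 y).div_const 6)).add ((hasDerivAt_pow 4 y).div_const 24)).sub ((hasDerivAt_pow 5 y).div_const 120)).add ((hasDerivAt_pow 6 y).div_const 720))
    have h := (hpoly.sub (hasDerivAt_expNeg y))
    refine h.congr_deriv ?_
    push_cast
    ring
  have key := nonneg_of_deriv _ _ hF (by norm_num) (fun y hy => by
    have h := step5 y hy
    linarith)
  intro x hx
  linarith [key x hx]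


private lemma step7 : ∀ x : ℝ, 0 ≤ x → 1 - x + x^2/2 - x^3/6 + x^4/24 - x^5/120 + x^6/720 - x^7/5040 ≤ Real.exp (-x) := by
  have hF : ∀ y : ℝ, HasDerivAt (fun z : ℝ => Real.exp (-z) - (1 - z + z^2/2 - z^3/6 + z^4/24 - z^5/120 + z^6/720 - z^7/5040)) (-Real.exp (-y) + (1 - y + y^2/2 - y^3/6 + y^4/24 - y^5/120 + y^6/720)) y := by
    intro y
    have hpoly := ((((((((hasDerivAt_const y (1:ℝ)).sub (hasDerivAt_id' (x := y))).add ((hasDerivAt_pow 2 y).div_const 2)).sub ((hasDerivAt_pow 3 y).div_const 6)).add ((hasDerivAt_pow 4 y).div_const 24)).sub ((hasDerivAt_pow 5 y).div_const 120)).add ((hasDerivAt_pow 6 y).div_const 720)).sub ((hasDerivAt_pow 7 y).div_const 5040))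
    have h := ((hasDerivAt_expNeg y).sub hpoly)
    refine h.congr_deriv ?_
    push_cast
    ring
  have key := nonneg_of_deriv _ _ hF (by norm_num) (fun y hy => by
    have h := step6 y hy
    linarith)
  intro x hx
  linarith [key x hx]

-- p(x):  1 - x^2/2 + x^4/8 - x^6/48 + x^8/384 - x^10/3840 + x^12/46080 - x^14/645120

private lemma hasDerivAt_G (y : ℝ) :
    HasDerivAt (fun z : ℝ => z - z^3/6 + z^5/40 - z^7/336 + z^9/3456 - z^11/42240 + z^13/599040 - z^15/9676800)
      (1 - y^2/2 + y^4/8 - y^6/48 + y^8/384 - y^10/3840 + y^12/46080 - y^14/645120) y := by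
  have h := ((((((((hasDerivAt_id' (𝕜 := ℝ) (x := y)).sub ((hasDerivAt_pow 3 y).div_const 6)).add ((hasDerivAt_pow 5 y).div_const 40)).sub ((hasDerivAt_pow 7 y).div_const 336)).add ((hasDerivAt_pow 9 y).div_const 3456)).sub ((hasDerivAt_pow 11 y).div_const 42240)).add ((hasDerivAt_pow 13 y).div_const 599040)).sub ((hasDerivAt_pow 15 y).div_const 9676800))
  refine h.congr_deriv ?_
  push_cast
  ring

private lemma int_lb (a b : ℝ) (hab : a ≤ b) :
    (b - b^3/6 + b^5/40 - b^7/336 + b^9/3456 - b^11/42240 + b^13/599040 - b^15/9676800) - (a - a^3/6 + a^5/40 - a^7/336 + a^9/3456 - a^11/42240 + a^13/599040 - a^15/9676800) ≤ ∫ x in a..b, Real.exp (-x^2/2) := by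
  have heval : (∫ x in a..b, (1 - x^2/2 + x^4/8 - x^6/48 + x^8/384 - x^10/3840 + x^12/46080 - x^14/645120)) =
      (b - b^3/6 + b^5/40 - b^7/336 + b^9/3456 - b^11/42240 + b^13/599040 - b^15/9676800) - (a - a^3/6 + a^5/40 - a^7/336 + a^9/3456 - a^11/42240 + a^13/599040 - a^15/9676800) :=
    intervalIntegral.integral_eq_sub_of_hasDerivAt (fun x _ => hasDerivAt_G x)
      ((by fun_prop : Continuous fun x : ℝ => (1 - x^2/2 + x^4/8 - x^6/48 + x^8/384 - x^10/3840 + x^12/46080 - x^14/645120)).intervalIntegrable a b)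
  rw [← heval]
  apply intervalIntegral.integral_mono_on hab
    ((by fun_prop : Continuous fun x : ℝ => (1 - x^2/2 + x^4/8 - x^6/48 + x^8/384 - x^10/3840 + x^12/46080 - x^14/645120)).intervalIntegrable a b)
    ((by fun_prop : Continuous fun x : ℝ => Real.exp (-x^2/2)).intervalIntegrable a b)
  intro x _
  have h := step7 (x^2/2) (by positivity)
  have e2 : (1 - x^2/2 + x^4/8 - x^6/48 + x^8/384 - x^10/3840 + x^12/46080 - x^14/645120) =
      1 - x^2/2 + (x^2/2)^2/2 - (x^2/2)^3/6 + (x^2/2)^4/24 - (x^2/2)^5/120 + (x^2/2)^6/720 - (x^2/2)^7/5040 := by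
    ring
  rw [show -x^2/2 = -(x^2/2) by ring]
  linarith

private lemma Hu_nonneg (u : ℝ) (hu0 : 0 ≤ u) (hu1 : u ≤ 1) :
    0 ≤ 42799909/403200000 + 71521/4480000 * u - 2183537/21600000 * u^2 - 1463/86400000 * u^3 + 80509/8000000 * u^4 - 769091/432000000 * u^5 - 16697/18900000 * u^6 + 5503/672000000 * u^7 - 524789/2016000000 * u^8 - 31141/96000000 * u^9 - 246199/1056000000 * u^10 - 1910791/15206400000 * u^11 - 4282753/89856000000 * u^12 - 1631417/139776000000 * u^13 - 1/604800 * u^14 - 1/9676800 * u^15 := by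
  have h2 : u^2 ≤ u := by nlinarith [mul_nonneg hu0 (sub_nonneg.mpr hu1)]
  have h3 : u^3 ≤ u^2 := by nlinarith [mul_nonneg (pow_nonneg hu0 2) (sub_nonneg.mpr hu1)]
  have h4 : u^4 ≤ u^3 := by nlinarith [mul_nonneg (pow_nonneg hu0 3) (sub_nonneg.mpr hu1)]
  have h5 : u^5 ≤ u^4 := by nlinarith [mul_nonneg (pow_nonneg hu0 4) (sub_nonneg.mpr hu1)]
  have h6 : u^6 ≤ u^5 := by nlinarith [mul_nonneg (pow_nonneg hu0 5) (sub_nonneg.mpr hu1)]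
  have h7 : u^7 ≤ u^6 := by nlinarith [mul_nonneg (pow_nonneg hu0 6) (sub_nonneg.mpr hu1)]
  have h8 : u^8 ≤ u^7 := by nlinarith [mul_nonneg (pow_nonneg hu0 7) (sub_nonneg.mpr hu1)]
  have h9 : u^9 ≤ u^8 := by nlinarith [mul_nonneg (pow_nonneg hu0 8) (sub_nonneg.mpr hu1)]
  have h10 : u^10 ≤ u^9 := by nlinarith [mul_nonneg (pow_nonneg hu0 9) (sub_nonneg.mpr hu1)]
  have h11 : u^11 ≤ u^10 := by nlinarith [mul_nonneg (pow_nonneg hu0 10) (sub_nonneg.mpr hu1)]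
  have h12 : u^12 ≤ u^11 := by nlinarith [mul_nonneg (pow_nonneg hu0 11) (sub_nonneg.mpr hu1)]
  have h13 : u^13 ≤ u^12 := by nlinarith [mul_nonneg (pow_nonneg hu0 12) (sub_nonneg.mpr hu1)]
  have h14 : u^14 ≤ u^13 := by nlinarith [mul_nonneg (pow_nonneg hu0 13) (sub_nonneg.mpr hu1)]
  have h15 : u^15 ≤ u^14 := by nlinarith [mul_nonneg (pow_nonneg hu0 14) (sub_nonneg.mpr hu1)]
  have h4n : (0:ℝ) ≤ u^4 := pow_nonneg hu0 4
  have h7n : (0:ℝ) ≤ u^7 := pow_nonneg hu0 7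
  linarith

private lemma int_subst (a b : ℝ) :
    (∫ t in (a/Real.sqrt 2)..(b/Real.sqrt 2), Real.exp (-t^2)) =
      (Real.sqrt 2)⁻¹ * ∫ x in a..b, Real.exp (-x^2/2) := by
  have hs2 : Real.sqrt 2 ≠ 0 := by positivity
  have h1 : (∫ x in a..b, Real.exp (-(x/Real.sqrt 2)^2)) =
      Real.sqrt 2 • ∫ t in (a/Real.sqrt 2)..(b/Real.sqrt 2), Real.exp (-t^2) :=
    intervalIntegral.integral_comp_div (f := fun t => Real.exp (-t^2)) hs2
  have h2 : (∫ x in a..b, Real.exp (-(x/Real.sqrt 2)^2)) = ∫ x in a..b, Real.exp (-x^2/2) := by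
    apply intervalIntegral.integral_congr
    intro x _
    have hx2 : (x/Real.sqrt 2)^2 = x^2/2 := by
      rw [div_pow, Real.sq_sqrt (by norm_num : (0:ℝ) ≤ 2)]
    simp only [hx2]
    congr 1
    ring
  rw [smul_eq_mul] at h1
  rw [← h2, h1]
  field_simp

private lemma erf_diff (X Y : ℝ) : erf X - erf Y = (2/Real.sqrt π) * ∫ t in Y..X, Real.exp (-t^2) := by
  unfold erf
  rw [← mul_sub]
  congr 1
  exact intervalIntegral.integral_interval_sub_left
    ((by fun_prop : Continuous fun t : ℝ => Real.exp (-t^2)).intervalIntegrable 0 X)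
    ((by fun_prop : Continuous fun t : ℝ => Real.exp (-t^2)).intervalIntegrable 0 Y)


/-- For every `c ∈ (1,2]`, the query-time exponent
`δ = ((p₁(c) − p₂)²/(1 − p₂))·(log₂ e)/4` satisfies `δ ≥ 0.03·(c−1)²`. -/
theorem delta_ge (c : ℝ) (hc : c ∈ Set.Ioc (1:ℝ) 2) :
    ((erf (c / Real.sqrt 2) - Real.sqrt (2 / π) * (1 / c) * (1 - Real.exp (-c ^ 2 / 2))
        - (erf (1 / Real.sqrt 2) - Real.sqrt (2 / π) * (1 - Real.exp (-(1:ℝ) / 2)))) ^ 2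
      / (1 - (erf (1 / Real.sqrt 2) - Real.sqrt (2 / π) * (1 - Real.exp (-(1:ℝ) / 2)))))
      * Real.logb 2 (Real.exp 1) / 4
      ≥ 0.03 * (c - 1) ^ 2 := by
  obtain ⟨hc1, hc2⟩ := hc
  have hc0 : (0:ℝ) < c := by linarith
  have hπ : (0:ℝ) < π := Real.pi_pos
  have hsπ : Real.sqrt π ≠ 0 := by positivity
  have hs2 : Real.sqrt 2 ≠ 0 := by positivity
  have hq2 : Real.sqrt 2 * Real.sqrt 2 = 2 := Real.mul_self_sqrt (by norm_num)
  set R := Real.sqrt (2/π) with hRdef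
  have hR2 : R^2 * π = 2 := by
    rw [hRdef, Real.sq_sqrt (by positivity : (0:ℝ) ≤ 2/π)]
    field_simp
  have hRnn : 0 ≤ R := Real.sqrt_nonneg _
  have hR_lb : (0.7978:ℝ) ≤ R := by nlinarith [Real.pi_lt_d6]
  have hR_ub : R ≤ (0.7979:ℝ) := by nlinarith [Real.pi_gt_d6]
  have hRs : (2/Real.sqrt π) * (Real.sqrt 2)⁻¹ = R := by
    rw [hRdef, Real.sqrt_div (by norm_num : (0:ℝ) ≤ 2) π]
    field_simp
    linear_combination (-1:ℝ) * hq2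
  -- exp(-1/2) bounds
  set E := Real.exp (-(1:ℝ)/2) with hEdef
  have hEpos : 0 < E := Real.exp_pos _
  have hEe : E * E * Real.exp 1 = 1 := by
    rw [hEdef, ← Real.exp_add, ← Real.exp_add]
    norm_num [Real.exp_zero]
  have hE2u : E * E < 0.36787945 := by
    nlinarith [Real.exp_one_gt_d9, Real.exp_pos 1]
  have hE2l : (0.36787943:ℝ) < E * E := by
    nlinarith [Real.exp_one_lt_d9, Real.exp_pos 1]
  have hE_ub : E ≤ 0.60654 := by nlinarith [hE2u, hEpos]
  have hE_lb : (0.60653:ℝ) ≤ E := by nlinarith [hE2l, hEpos]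
  -- the erf difference
  set J := ∫ x in (1:ℝ)..c, Real.exp (-x^2/2) with hJdef
  have herfd : erf (c/Real.sqrt 2) - erf (1/Real.sqrt 2) = R * J := by
    rw [erf_diff (c/Real.sqrt 2) (1/Real.sqrt 2), int_subst 1 c, ← mul_assoc, hRs]
  have hJlb : (c - c^3/6 + c^5/40 - c^7/336 + c^9/3456 - c^11/42240 + c^13/599040 - c^15/9676800) - (1 - 1^3/6 + 1^5/40 - 1^7/336 + 1^9/3456 - 1^11/42240 + 1^13/599040 - 1^15/9676800) ≤ J := int_lb 1 c (by linarith)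
  -- lower bound on W
  set Es := Real.exp (-((c^2 - 1)/2)) with hEsdef
  have hEs_pos : 0 < Es := Real.exp_pos _
  have hEs_le_one : Es ≤ 1 := Real.exp_le_one_iff.mpr (by nlinarith)
  have hsplitc : Real.exp (-c^2/2) = E * Es := by
    rw [hEdef, hEsdef, ← Real.exp_add]
    congr 1
    ring
  have hTs : (1 - ((c^2 - 1)/2) + ((c^2 - 1)/2)^2/2 - ((c^2 - 1)/2)^3/6 + ((c^2 - 1)/2)^4/24 - ((c^2 - 1)/2)^5/120 + ((c^2 - 1)/2)^6/720 - ((c^2 - 1)/2)^7/5040) ≤ Es := step7 ((c^2 - 1)/2) (by nlinarith)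
  have hinvc : (0:ℝ) < 1/c := by positivity
  have hneg : (1/c) * Es - 1 ≤ 0 := by
    have h1c : 1/c ≤ 1 := by rw [div_le_one hc0]; linarith
    have h2 := mul_le_one₀ h1c hEs_pos.le hEs_le_one
    linarith
  have hW1 : (0.60654:ℝ) * ((1/c) * Es - 1) ≤ E * ((1/c) * Es - 1) :=
    mul_le_mul_of_nonpos_right hE_ub hneg
  have hW2 : (0.60654:ℝ) * ((1/c) * (1 - ((c^2 - 1)/2) + ((c^2 - 1)/2)^2/2 - ((c^2 - 1)/2)^3/6 + ((c^2 - 1)/2)^4/24 - ((c^2 - 1)/2)^5/120 + ((c^2 - 1)/2)^6/720 - ((c^2 - 1)/2)^7/5040) - 1) ≤ (0.60654:ℝ) * ((1/c) * Es - 1) := by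
    have := mul_le_mul_of_nonneg_left hTs hinvc.le
    linarith
  -- key polynomial inequality
  have hpoly : (0.2873:ℝ) * (c - 1) ≤ ((c - c^3/6 + c^5/40 - c^7/336 + c^9/3456 - c^11/42240 + c^13/599040 - c^15/9676800) - (1 - 1^3/6 + 1^5/40 - 1^7/336 + 1^9/3456 - 1^11/42240 + 1^13/599040 - 1^15/9676800)) + 1 - 1/c
      + (0.60654:ℝ) * ((1/c) * (1 - ((c^2 - 1)/2) + ((c^2 - 1)/2)^2/2 - ((c^2 - 1)/2)^3/6 + ((c^2 - 1)/2)^4/24 - ((c^2 - 1)/2)^5/120 + ((c^2 - 1)/2)^6/720 - ((c^2 - 1)/2)^7/5040) - 1) := by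
    have hHu : 0 ≤ 42799909/403200000 + 71521/4480000 * (c - 1) - 2183537/21600000 * (c - 1)^2 - 1463/86400000 * (c - 1)^3 + 80509/8000000 * (c - 1)^4 - 769091/432000000 * (c - 1)^5 - 16697/18900000 * (c - 1)^6 + 5503/672000000 * (c - 1)^7 - 524789/2016000000 * (c - 1)^8 - 31141/96000000 * (c - 1)^9 - 246199/1056000000 * (c - 1)^10 - 1910791/15206400000 * (c - 1)^11 - 4282753/89856000000 * (c - 1)^12 - 1631417/139776000000 * (c - 1)^13 - 1/604800 * (c - 1)^14 - 1/9676800 * (c - 1)^15 := Hu_nonneg (c - 1) (by linarith) (by linarith)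
    have hkey : (((c - c^3/6 + c^5/40 - c^7/336 + c^9/3456 - c^11/42240 + c^13/599040 - c^15/9676800) - (1 - 1^3/6 + 1^5/40 - 1^7/336 + 1^9/3456 - 1^11/42240 + 1^13/599040 - 1^15/9676800)) + 1 - 1/c
        + (0.60654:ℝ) * ((1/c) * (1 - ((c^2 - 1)/2) + ((c^2 - 1)/2)^2/2 - ((c^2 - 1)/2)^3/6 + ((c^2 - 1)/2)^4/24 - ((c^2 - 1)/2)^5/120 + ((c^2 - 1)/2)^6/720 - ((c^2 - 1)/2)^7/5040) - 1) - (0.2873:ℝ) * (c - 1)) * c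
        = (c - 1) * (42799909/403200000 + 71521/4480000 * (c - 1) - 2183537/21600000 * (c - 1)^2 - 1463/86400000 * (c - 1)^3 + 80509/8000000 * (c - 1)^4 - 769091/432000000 * (c - 1)^5 - 16697/18900000 * (c - 1)^6 + 5503/672000000 * (c - 1)^7 - 524789/2016000000 * (c - 1)^8 - 31141/96000000 * (c - 1)^9 - 246199/1056000000 * (c - 1)^10 - 1910791/15206400000 * (c - 1)^11 - 4282753/89856000000 * (c - 1)^12 - 1631417/139776000000 * (c - 1)^13 - 1/604800 * (c - 1)^14 - 1/9676800 * (c - 1)^15) := by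
      field_simp
      ring
    have h5 : 0 ≤ (c - 1) * (42799909/403200000 + 71521/4480000 * (c - 1) - 2183537/21600000 * (c - 1)^2 - 1463/86400000 * (c - 1)^3 + 80509/8000000 * (c - 1)^4 - 769091/432000000 * (c - 1)^5 - 16697/18900000 * (c - 1)^6 + 5503/672000000 * (c - 1)^7 - 524789/2016000000 * (c - 1)^8 - 31141/96000000 * (c - 1)^9 - 246199/1056000000 * (c - 1)^10 - 1910791/15206400000 * (c - 1)^11 - 4282753/89856000000 * (c - 1)^12 - 1631417/139776000000 * (c - 1)^13 - 1/604800 * (c - 1)^14 - 1/9676800 * (c - 1)^15) := mul_nonneg (by linarith) hHu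
    rw [← sub_nonneg]
    have hXeq : ((((c - c^3/6 + c^5/40 - c^7/336 + c^9/3456 - c^11/42240 + c^13/599040 - c^15/9676800) - (1 - 1^3/6 + 1^5/40 - 1^7/336 + 1^9/3456 - 1^11/42240 + 1^13/599040 - 1^15/9676800)) + 1 - 1/c
        + (0.60654:ℝ) * ((1/c) * (1 - ((c^2 - 1)/2) + ((c^2 - 1)/2)^2/2 - ((c^2 - 1)/2)^3/6 + ((c^2 - 1)/2)^4/24 - ((c^2 - 1)/2)^5/120 + ((c^2 - 1)/2)^6/720 - ((c^2 - 1)/2)^7/5040) - 1) - (0.2873:ℝ) * (c - 1))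
        = ((c - 1) * (42799909/403200000 + 71521/4480000 * (c - 1) - 2183537/21600000 * (c - 1)^2 - 1463/86400000 * (c - 1)^3 + 80509/8000000 * (c - 1)^4 - 769091/432000000 * (c - 1)^5 - 16697/18900000 * (c - 1)^6 + 5503/672000000 * (c - 1)^7 - 524789/2016000000 * (c - 1)^8 - 31141/96000000 * (c - 1)^9 - 246199/1056000000 * (c - 1)^10 - 1910791/15206400000 * (c - 1)^11 - 4282753/89856000000 * (c - 1)^12 - 1631417/139776000000 * (c - 1)^13 - 1/604800 * (c - 1)^14 - 1/9676800 * (c - 1)^15)) / c) := by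
      rw [eq_div_iff hc0.ne']
      exact hkey
    rw [hXeq]
    exact div_nonneg h5 hc0.le
  -- assemble D lower bound
  set W := (1 - E) - 1/c * (1 - Real.exp (-c^2/2)) with hWdef
  have hWeq : W = 1 - 1/c + E * ((1/c) * Es - 1) := by
    rw [hWdef, hsplitc]
    ring
  have hM : (0.2873:ℝ) * (c - 1) ≤ J + W := by
    rw [hWeq]
    linarith
  clear hJlb hpoly hW1 hW2 hTs hneg
  have hMnn : 0 ≤ J + W := le_trans (by linarith) hM
  set D := erf (c / Real.sqrt 2) - R * (1 / c) * (1 - Real.exp (-c ^ 2 / 2))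
      - (erf (1 / Real.sqrt 2) - R * (1 - E)) with hDdef
  have hDeq : D = R * (J + W) := by
    rw [hDdef, hWdef]
    linear_combination herfd
  have hD : (0.7978:ℝ) * ((0.2873:ℝ) * (c - 1)) ≤ D := by
    rw [hDeq]
    exact mul_le_mul hR_lb hM (by linarith) hRnn
  have hDnn : 0 ≤ D := le_trans (by linarith) hD
  -- bounds on 1 - p2
  have hI1lb : (0.8556:ℝ) ≤ ∫ x in (0:ℝ)..1, Real.exp (-x^2/2) := by
    have h := int_lb 0 1 (by norm_num)
    norm_num at h
    linarith
  have hI1ub : (∫ x in (0:ℝ)..1, Real.exp (-x^2/2)) ≤ 1 := by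
    have h := intervalIntegral.integral_mono_on (μ := MeasureTheory.volume)
      (f := fun x : ℝ => Real.exp (-x^2/2)) (g := fun _ : ℝ => (1:ℝ))
      (by norm_num : (0:ℝ) ≤ 1)
      ((by fun_prop : Continuous fun x : ℝ => Real.exp (-x^2/2)).intervalIntegrable 0 1)
      ((by fun_prop : Continuous fun _ : ℝ => (1:ℝ)).intervalIntegrable 0 1)
      (fun x _ => Real.exp_le_one_iff.mpr (by nlinarith))
    simpa using h
  have herf1 : erf (1/Real.sqrt 2) = R * ∫ x in (0:ℝ)..1, Real.exp (-x^2/2) := by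
    have h := erf_diff (1/Real.sqrt 2) 0
    have h0 : erf 0 = 0 := by unfold erf; simp
    have hsub : (∫ t in (0:ℝ)..(1/Real.sqrt 2), Real.exp (-t^2))
        = (Real.sqrt 2)⁻¹ * ∫ x in (0:ℝ)..1, Real.exp (-x^2/2) := by
      have h' := int_subst 0 1
      rwa [zero_div] at h'
    rw [h0, sub_zero, hsub, ← mul_assoc, hRs] at h
    exact h
  have hp2ub : 1 - (erf (1/Real.sqrt 2) - R * (1 - E)) ≤ 0.6314 := by
    have h1 : (0.7978:ℝ) * (0.8556:ℝ) ≤ erf (1/Real.sqrt 2) := by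
      rw [herf1]
      exact mul_le_mul hR_lb hI1lb (by norm_num) hRnn
    have h2 : R * (1 - E) ≤ (0.7979:ℝ) * (1 - 0.60653) :=
      mul_le_mul hR_ub (by linarith) (by linarith) (by norm_num)
    norm_num at h1 h2 ⊢
    linarith
  have hp2pos : 0 < 1 - (erf (1/Real.sqrt 2) - R * (1 - E)) := by
    have h1 : erf (1/Real.sqrt 2) ≤ (0.7979:ℝ) * 1 := by
      rw [herf1]
      apply mul_le_mul hR_ub hI1ub _ (by norm_num)
      calc (0:ℝ) ≤ 0.8556 := by norm_num
        _ ≤ _ := hI1lb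
    have h2 : 0 ≤ R * (1 - E) := mul_nonneg hRnn (by linarith)
    linarith
  have hL : (1.4426:ℝ) ≤ Real.logb 2 (Real.exp 1) := by
    rw [Real.logb, Real.log_exp, le_div_iff₀ (Real.log_pos (by norm_num))]
    linarith [Real.log_two_lt_d9]
  -- final assembly
  rw [ge_iff_le]
  have hd2 : ((0.7978:ℝ) * ((0.2873:ℝ) * (c - 1)))^2 ≤ D^2 := by
    have := pow_le_pow_left₀ (by linarith) hD 2
    exact this
  have hdiv : ((0.7978:ℝ) * ((0.2873:ℝ) * (c - 1)))^2 / (0.6314:ℝ)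
      ≤ D^2 / (1 - (erf (1/Real.sqrt 2) - R * (1 - E))) :=
    div_le_div₀ (sq_nonneg D) hd2 hp2pos hp2ub
  have hmul : ((0.7978:ℝ) * ((0.2873:ℝ) * (c - 1)))^2 / (0.6314:ℝ) * (1.4426:ℝ)
      ≤ D^2 / (1 - (erf (1/Real.sqrt 2) - R * (1 - E))) * Real.logb 2 (Real.exp 1) :=
    mul_le_mul hdiv hL (by norm_num) (div_nonneg (sq_nonneg D) hp2pos.le)
  have hfinal : (0.03:ℝ) * (c - 1)^2 ≤ ((0.7978:ℝ) * ((0.2873:ℝ) * (c - 1)))^2 / (0.6314:ℝ) * (1.4426:ℝ) / 4 := by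
    have heq : (0.7978*(0.2873*(c-1)))^2 / (0.6314:ℝ) * (1.4426:ℝ) / 4 - 0.03*(c-1)^2
        = (260464754953717/31570000000000000000 : ℝ) * (c-1)^2 := by
      ring
    have h9 : (0:ℝ) ≤ (260464754953717/31570000000000000000 : ℝ) * (c-1)^2 :=
      mul_nonneg (by norm_num) (sq_nonneg _)
    linarith
  calc (0.03:ℝ) * (c - 1)^2 ≤ _ := hfinal
    _ ≤ _ := by linarith
end

section
/- Let w > 0 and let t be a random variable uniformly distributed on [0, w). Then for all real numbers x and y, Pr[ ⌊(x + t)/w⌋ = ⌊(y + t)/w⌋ ] = max(0, 1 − |x − y|/w). -/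
open MeasureTheory

lemma grid_lsh_aux (w : ℝ) (hw : 0 < w) (x y : ℝ) (hxy : x ≤ y) :
    ((ENNReal.ofReal w)⁻¹ • volume.restrict (Set.Ico (0:ℝ) w))
        {t | ⌊(x + t) / w⌋ = ⌊(y + t) / w⌋}
      = ENNReal.ofReal (max 0 (1 - (y - x) / w)) := by
  set S := {t : ℝ | ⌊(x + t) / w⌋ = ⌊(y + t) / w⌋} with hS
  have hmeas : ((ENNReal.ofReal w)⁻¹ • volume.restrict (Set.Ico (0:ℝ) w)) S
      = (ENNReal.ofReal w)⁻¹ * volume (S ∩ Set.Ico (0:ℝ) w) := by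
    rw [Measure.smul_apply, Measure.restrict_apply' measurableSet_Ico, smul_eq_mul]
  rcases le_or_gt w (y - x) with hd | hd
  · -- far apart: empty set
    have hempty : S = (∅ : Set ℝ) := by
      ext t
      simp only [hS, Set.mem_setOf_eq, Set.mem_empty_iff_false, iff_false]
      intro h
      have h1 : (x + t) / w + 1 ≤ (y + t) / w := by
        rw [div_add' _ _ _ (ne_of_gt hw)]
        apply div_le_div_of_nonneg_right (by linarith) hw.le
      have h2 : ⌊(x + t) / w⌋ + 1 ≤ ⌊(y + t) / w⌋ := by
        have := Int.floor_le_floor h1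
        rwa [Int.floor_add_one] at this
      omega
    rw [hempty] at hmeas ⊢
    rw [hmeas]
    have : max 0 (1 - (y - x) / w) = 0 := by
      apply max_eq_left
      have : 1 ≤ (y - x) / w := (one_le_div hw).mpr hd
      linarith
    simp [this]
  · -- close: compute the set explicitly
    set d := y - x with hd'
    have hd0 : 0 ≤ d := by simp [hd']; linarith
    set k := ⌊y / w⌋ with hk
    have hky : (k : ℝ) * w ≤ y := by
      have := Int.floor_le (y / w)
      calc (k : ℝ) * w ≤ (y / w) * w := by nlinarith
        _ = y := div_mul_cancel₀ y (ne_of_gt hw)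
    have hky' : y < ((k : ℝ) + 1) * w := by
      have := Int.lt_floor_add_one (y / w)
      rw [← hk] at this
      exact (div_lt_iff₀ hw).mp this
    set c := ((k : ℝ) + 1) * w - y with hc
    have hc0 : 0 < c := by simp [hc]; linarith
    have hcw : c ≤ w := by simp [hc]; nlinarith
    set a₁ := max 0 ((k : ℝ) * w - x) with ha₁
    set a₂ := c + d with ha₂
    -- floor values of (y+t)/w on [0,w)
    have hfl_lo : ∀ t : ℝ, 0 ≤ t → t < c → ⌊(y + t) / w⌋ = k := by
      intro t ht0 htc
      rw [Int.floor_eq_iff]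
      constructor
      · rw [le_div_iff₀ hw]; linarith
      · rw [div_lt_iff₀ hw]; push_cast; simp only [hc] at htc; linarith
    have hfl_hi : ∀ t : ℝ, c ≤ t → t < w → ⌊(y + t) / w⌋ = k + 1 := by
      intro t htc htw
      rw [Int.floor_eq_iff]
      constructor
      · push_cast; rw [le_div_iff₀ hw]; simp only [hc] at htc; linarith
      · push_cast; rw [div_lt_iff₀ hw]; nlinarith
    -- key characterization of collision
    have key : ∀ t : ℝ, (⌊(x + t) / w⌋ = ⌊(y + t) / w⌋ ↔
        (⌊(y + t) / w⌋ : ℝ) * w ≤ x + t) := by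
      intro t
      constructor
      · intro h
        have := Int.floor_le ((x + t) / w)
        rw [← h] at *
        calc (⌊(x + t) / w⌋ : ℝ) * w ≤ ((x + t) / w) * w := by nlinarith
          _ = x + t := div_mul_cancel₀ _ (ne_of_gt hw)
      · intro h
        have h1 : (⌊(y + t) / w⌋ : ℝ) ≤ (x + t) / w := by
          rw [le_div_iff₀ hw]; linarith
        have h2 : ⌊(y + t) / w⌋ ≤ ⌊(x + t) / w⌋ := Int.le_floor.mpr h1
        have h3 : ⌊(x + t) / w⌋ ≤ ⌊(y + t) / w⌋ := by
          exact Int.floor_le_floor (div_le_div_of_nonneg_right (by linarith) hw.le)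
        omega
    -- set equality
    have hseteq : S ∩ Set.Ico (0:ℝ) w = Set.Ico a₁ c ∪ Set.Ico a₂ w := by
      ext t
      simp only [hS, Set.mem_inter_iff, Set.mem_setOf_eq, Set.mem_Ico, Set.mem_union]
      constructor
      · rintro ⟨h, ht0, htw⟩
        rcases lt_or_ge t c with htc | htc
        · left
          refine ⟨max_le ht0 ?_, htc⟩
          have hfl := hfl_lo t ht0 htc
          rw [key t, hfl] at h
          linarith
        · right
          refine ⟨?_, htw⟩
          have hfl := hfl_hi t htc htw
          rw [key t, hfl] at h
          push_cast at h
          simp only [ha₂, hc, hd']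
          linarith
      · rintro (⟨ha, htc⟩ | ⟨ha, htw⟩)
        · have ht0 : 0 ≤ t := le_trans (le_max_left _ _) ha
          have htw : t < w := lt_of_lt_of_le htc hcw
          refine ⟨?_, ht0, htw⟩
          rw [key t, hfl_lo t ht0 htc]
          have : (k : ℝ) * w - x ≤ t := le_trans (le_max_right _ _) ha
          linarith
        · have htc : c ≤ t := by
            simp only [ha₂] at ha; linarith
          have ht0 : 0 ≤ t := le_trans (le_of_lt hc0) htc
          refine ⟨?_, ht0, htw⟩
          rw [key t, hfl_hi t htc htw]
          push_cast
          simp only [ha₂, hc, hd'] at ha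
          linarith
    -- disjointness
    have hdisj : Disjoint (Set.Ico a₁ c) (Set.Ico a₂ w) := by
      apply Set.disjoint_left.mpr
      rintro t ⟨_, htc⟩ ⟨ha, _⟩
      simp only [ha₂] at ha
      linarith
    rw [hmeas, hseteq, measure_union hdisj measurableSet_Ico,
      Real.volume_Ico, Real.volume_Ico]
    have hvol : ENNReal.ofReal (c - a₁) + ENNReal.ofReal (w - a₂)
        = ENNReal.ofReal (w - d) := by
      rcases le_or_gt a₂ w with h | h
      · have ha10 : a₁ = 0 := by
          apply max_eq_left
          simp only [ha₂, hc, hd'] at h ⊢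
          linarith
        rw [ha10, sub_zero, ← ENNReal.ofReal_add (le_of_lt hc0) (by linarith)]
        congr 1
        simp only [ha₂]; ring
      · have ha1v : a₁ = (k : ℝ) * w - x := by
          apply max_eq_right
          simp only [ha₂, hc, hd'] at h
          linarith
        have h2 : ENNReal.ofReal (w - a₂) = 0 := by
          apply ENNReal.ofReal_eq_zero.mpr; linarith
        rw [h2, add_zero, ha1v]
        congr 1
        simp only [hc, hd']; ring
    rw [hvol]
    have hmax : max 0 (1 - d / w) = (w - d) / w := by
      rw [max_eq_right]
      · field_simp
      · have : d / w ≤ 1 := by rw [div_le_one hw]; linarith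
        linarith
    rw [hmax, ENNReal.ofReal_div_of_pos hw, ENNReal.div_eq_inv_mul]

/-- Single-coordinate collision probability of the randomly shifted grid LSH family:
if `t` is uniform on `[0, w)`, then `Pr[⌊(x+t)/w⌋ = ⌊(y+t)/w⌋] = max(0, 1 − |x−y|/w)`. -/
theorem grid_lsh_collision (w : ℝ) (hw : 0 < w) (x y : ℝ) :
    ((ENNReal.ofReal w)⁻¹ • volume.restrict (Set.Ico (0:ℝ) w))
        {t | ⌊(x + t) / w⌋ = ⌊(y + t) / w⌋}
      = ENNReal.ofReal (max 0 (1 - |x - y| / w)) := by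
  rcases le_total x y with h | h
  · rw [abs_of_nonpos (by linarith), neg_sub]
    exact grid_lsh_aux w hw x y h
  · rw [abs_of_nonneg (by linarith)]
    have hset : {t : ℝ | ⌊(x + t) / w⌋ = ⌊(y + t) / w⌋}
        = {t : ℝ | ⌊(y + t) / w⌋ = ⌊(x + t) / w⌋} := by
      ext t; simp [eq_comm]
    rw [hset]
    exact grid_lsh_aux w hw y x h
end
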